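/- Let D be a bounded domain in ℂᴺ. Then the identity map id_D : D → D is m-extremal for every m ≥ 2: for any m distinct points λ₁,…,λ_m ∈ D, there is no open neighborhood U of the closure of D and holomorphic map h : U → D with h(λⱼ) = λⱼ for all j. In fact it suffices to prove the case m = 2: there is no holomorphic h on a neighborhood of D̄ with values in D fixing two distinct points of D. -/

import Mathlib

open Complex Metric Set

noncomputable section

/-- The open unit disc in `ℂ`. -/
def 𝔻 : Set ℂ := Metric.ball 0 1

/-- `B` is a Blaschke product of degree `m` on the unit disc: a unimodular constant
times a product of `m` Möbius factors. -/
def IsBlaschke (m : ℕ) (B : ℂ → ℂ) : Prop :=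
  ∃ (ω : ℂ) (a : Fin m → ℂ), ‖ω‖ = 1 ∧ (∀ j, a j ∈ 𝔻) ∧
    ∀ z ∈ 𝔻, B z = ω * ∏ j, (a j - z) / (1 - (starRingEnd ℂ) (a j) * z)

variable {E : Type*} [NormedAddCommGroup E] [NormedSpace ℂ E]

/-- The interpolation data `lam j ↦ f (lam j)` is extremally solvable (through `f`):
no map holomorphic on a neighbourhood of the closed unit disc with values in `D`
interpolates `f` at the points `lam j`. -/
def ExtSolv (D : Set E) {m : ℕ} (lam : Fin m → ℂ) (f : ℂ → E) : Prop :=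
  ¬ ∃ (U : Set ℂ) (g : ℂ → E), IsOpen U ∧ Metric.closedBall (0 : ℂ) 1 ⊆ U ∧
      DifferentiableOn ℂ g U ∧ (∀ z ∈ U, g z ∈ D) ∧ ∀ j, g (lam j) = f (lam j)

/-- `f : 𝔻 → D` is a weak `m`-extremal with respect to the distinct points `lam`. -/
def IsWeakExtremal (D : Set E) {m : ℕ} (lam : Fin m → ℂ) (f : ℂ → E) : Prop :=
  DifferentiableOn ℂ f 𝔻 ∧ (∀ z ∈ 𝔻, f z ∈ D) ∧ ExtSolv D lam f

/-- `f : 𝔻 → D` is `m`-extremal: for all choices of `m` distinct points of `𝔻` the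
corresponding interpolation data is extremally solvable. -/
def IsMExtremal (D : Set E) (m : ℕ) (f : ℂ → E) : Prop :=
  DifferentiableOn ℂ f 𝔻 ∧ (∀ z ∈ 𝔻, f z ∈ D) ∧
    ∀ lam : Fin m → ℂ, Function.Injective lam → (∀ j, lam j ∈ 𝔻) → ExtSolv D lam f

/-- The Minkowski functional of a set `D`. -/
def mink (D : Set E) (z : E) : ℝ := sInf {t : ℝ | 0 < t ∧ ((t : ℂ))⁻¹ • z ∈ D}

/-- `φ` is a holomorphic automorphism of `D`. -/
def IsAutomorphismOf (D : Set E) (φ : E → E) : Prop :=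
  DifferentiableOn ℂ φ D ∧ Set.MapsTo φ D D ∧
    ∃ ψ : E → E, DifferentiableOn ℂ ψ D ∧ Set.MapsTo ψ D D ∧
      (∀ z ∈ D, ψ (φ z) = z) ∧ (∀ z ∈ D, φ (ψ z) = z)

/-- The group of holomorphic automorphisms of `D` acts transitively. -/
def Homogeneous (D : Set E) : Prop :=
  ∀ z ∈ D, ∀ w ∈ D, ∃ φ : E → E, IsAutomorphismOf D φ ∧ φ z = w

/-- `f` is an `m`-complex geodesic of `D`: there is `F ∈ 𝒪(D, 𝔻)` such that `F ∘ f` is a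
non-constant Blaschke product of degree at most `m - 1`. -/
def IsComplexGeodesicOfOrder (D : Set E) (m : ℕ) (f : ℂ → E) : Prop :=
  DifferentiableOn ℂ f 𝔻 ∧ (∀ z ∈ 𝔻, f z ∈ D) ∧
    ∃ F : E → ℂ, DifferentiableOn ℂ F D ∧ (∀ z ∈ D, F z ∈ 𝔻) ∧
      ∃ k : ℕ, 1 ≤ k ∧ k ≤ m - 1 ∧ ∃ B : ℂ → ℂ, IsBlaschke k B ∧
        ∀ z ∈ 𝔻, F (f z) = B z

/-- The sub-mean-value property on circles, for a real function on a subset of `ℂ`. -/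
def SubmeanOn (u : ℂ → ℝ) (S : Set ℂ) : Prop :=
  ∀ (c : ℂ) (r : ℝ), 0 < r → Metric.closedBall c r ⊆ S →
    u c ≤ (2 * Real.pi)⁻¹ * ∫ θ in (0:ℝ)..(2 * Real.pi), u (c + r * Complex.exp (θ * Complex.I))

/-- `u` is plurisubharmonic on `D`: upper semicontinuous and submean on every complex line. -/
def PlurisubharmonicOn (u : E → ℝ) (D : Set E) : Prop :=
  UpperSemicontinuousOn u D ∧
    ∀ (z v : E), SubmeanOn (fun w : ℂ => u (z + w • v)) {w : ℂ | z + w • v ∈ D}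

/-- Hartogs pseudoconvexity: `- log dist(·, ∂D)` is plurisubharmonic on `D`. -/
def IsPseudoconvex (D : Set E) : Prop :=
  PlurisubharmonicOn (fun z => - Real.log (Metric.infDist z Dᶜ)) D


section AuxSchwarz

variable {E' : Type*} [NormedAddCommGroup E'] [NormedSpace ℂ E']
variable {F' : Type*} [NormedAddCommGroup F'] [NormedSpace ℂ F']

/-- Schwarz-type Lipschitz estimate for a holomorphic map between complex normed spaces. -/
lemma aux_line_lip {f : E' → F'} {z w : E'} {R₁ R₂ : ℝ}
    (hd : DifferentiableOn ℂ f (ball z R₁))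
    (hmaps : Set.MapsTo f (ball z R₁) (ball (f z) R₂))
    (hw : w ∈ ball z R₁) :
    ‖f w - f z‖ ≤ R₂ / R₁ * ‖w - z‖ := by
  have hR₁ : 0 < R₁ := nonempty_ball.1 ⟨w, hw⟩
  have hR₂ : 0 < R₂ := nonempty_ball.1 ⟨f z, hmaps (mem_ball_self hR₁)⟩
  rcases eq_or_ne w z with rfl | hne
  · simp [div_nonneg hR₂.le hR₁.le]
  set v := w - z with hv
  have hvpos : 0 < ‖v‖ := by
    rw [norm_pos_iff]; exact sub_ne_zero.2 hne
  set g : ℂ → F' := fun t => f (z + t • v) with hg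
  have hline : ∀ t : ℂ, t ∈ ball (0 : ℂ) (R₁ / ‖v‖) → z + t • v ∈ ball z R₁ := by
    intro t ht
    rw [mem_ball, dist_eq_norm] at ht ⊢
    have : ‖z + t • v - z‖ = ‖t‖ * ‖v‖ := by
      rw [add_sub_cancel_left, norm_smul]
    rw [this]
    calc ‖t‖ * ‖v‖ < R₁ / ‖v‖ * ‖v‖ := by
          apply mul_lt_mul_of_pos_right _ hvpos
          simpa using ht
      _ = R₁ := by field_simp
  have hgd : DifferentiableOn ℂ g (ball (0 : ℂ) (R₁ / ‖v‖)) := by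
    apply hd.comp (f := fun t : ℂ => z + t • v)
    · exact (((differentiable_id).smul_const v).const_add z).differentiableOn
    · exact fun t ht => hline t ht
  have hg0 : g 0 = f z := by simp [hg]
  have hgm : Set.MapsTo g (ball (0 : ℂ) (R₁ / ‖v‖)) (ball (g 0) R₂) := by
    intro t ht
    rw [hg0]
    exact hmaps (hline t ht)
  have h1 : (1 : ℂ) ∈ ball (0 : ℂ) (R₁ / ‖v‖) := by
    rw [mem_ball, dist_zero_right, norm_one, lt_div_iff₀ hvpos, one_mul]
    rw [mem_ball, dist_eq_norm] at hw
    exact hw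
  have := Complex.dist_le_div_mul_dist_of_mapsTo_ball hgd (hgm.mono_right ball_subset_closedBall) h1
  rw [hg0, dist_zero_right, norm_one, mul_one, dist_eq_norm] at this
  have hg1 : g 1 = f w := by simp [hg, hv]
  rw [hg1] at this
  calc ‖f w - f z‖ ≤ R₂ / (R₁ / ‖v‖) := this
    _ = R₂ / R₁ * ‖v‖ := by field_simp

/-- Schwarz estimate for the operator norm of the Fréchet derivative. -/
lemma aux_fderiv_bound {f : E' → F'} {z : E'} {T : E' →L[ℂ] F'} {R₁ R₂ : ℝ}
    (hR₁ : 0 < R₁)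
    (hd : DifferentiableOn ℂ f (ball z R₁))
    (hmaps : Set.MapsTo f (ball z R₁) (ball (f z) R₂))
    (hT : HasFDerivAt f T z) : ‖T‖ ≤ R₂ / R₁ := by
  have hR₂ : 0 < R₂ := nonempty_ball.1 ⟨f z, hmaps (mem_ball_self hR₁)⟩
  refine ContinuousLinearMap.opNorm_le_bound T (div_nonneg hR₂.le hR₁.le) fun u => ?_
  rcases eq_or_ne u 0 with rfl | hu
  · simp
  have hupos : 0 < ‖u‖ := norm_pos_iff.2 hu
  set g : ℂ → F' := fun t => f (z + t • u) with hg
  have hline : ∀ t : ℂ, t ∈ ball (0 : ℂ) (R₁ / ‖u‖) → z + t • u ∈ ball z R₁ := by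
    intro t ht
    rw [mem_ball, dist_eq_norm] at ht ⊢
    have : ‖z + t • u - z‖ = ‖t‖ * ‖u‖ := by
      rw [add_sub_cancel_left, norm_smul]
    rw [this]
    calc ‖t‖ * ‖u‖ < R₁ / ‖u‖ * ‖u‖ := by
          apply mul_lt_mul_of_pos_right _ hupos
          simpa using ht
      _ = R₁ := by field_simp
  have hgd : DifferentiableOn ℂ g (ball (0 : ℂ) (R₁ / ‖u‖)) := by
    apply hd.comp (f := fun t : ℂ => z + t • u)
    · exact (((differentiable_id).smul_const u).const_add z).differentiableOn
    · exact fun t ht => hline t ht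
  have hg0 : g 0 = f z := by simp [hg]
  have hgm : Set.MapsTo g (ball (0 : ℂ) (R₁ / ‖u‖)) (ball (g 0) R₂) := by
    intro t ht
    rw [hg0]
    exact hmaps (hline t ht)
  have hgder : HasDerivAt g (T u) 0 := by
    have h1 : HasDerivAt (fun t : ℂ => z + t • u) u 0 := by
      simpa using ((hasDerivAt_id (0 : ℂ)).smul_const u).const_add z
    have hT' : HasFDerivAt f T ((fun t : ℂ => z + t • u) 0) := by simpa using hT
    exact hT'.comp_hasDerivAt 0 h1
  have hb := Complex.norm_deriv_le_div_of_mapsTo_ball hgd (hgm.mono_right ball_subset_closedBall) (div_pos hR₁ hupos)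
  rw [hgder.deriv] at hb
  calc ‖T u‖ ≤ R₂ / (R₁ / ‖u‖) := hb
    _ = R₂ / R₁ * ‖u‖ := by field_simp

end AuxSchwarz

set_option maxHeartbeats 1000000 in
set_option synthInstance.maxHeartbeats 400000 in
theorem stmt19 {N : ℕ} (D : Set (Fin N → ℂ)) (hDo : IsOpen D) (hDc : IsConnected D)
    (hbd : Bornology.IsBounded D)
    (m : ℕ) (hm : 2 ≤ m) (lam : Fin m → Fin N → ℂ)
    (hinj : Function.Injective lam) (hmem : ∀ j, lam j ∈ D) :
    ¬ ∃ (U : Set (Fin N → ℂ)) (h : (Fin N → ℂ) → (Fin N → ℂ)),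
        IsOpen U ∧ closure D ⊆ U ∧ DifferentiableOn ℂ h U ∧ (∀ z ∈ U, h z ∈ D) ∧
        ∀ j, h (lam j) = lam j := by
  rintro ⟨U, h, hUo, hclU, hdiff, hmapsU, hfix⟩
  have h2 : (⟨0, by omega⟩ : Fin m) ≠ ⟨1, by omega⟩ := by simp [Fin.ext_iff]
  set p := lam ⟨0, by omega⟩ with hp
  set q := lam ⟨1, by omega⟩ with hq
  have hpq : p ≠ q := fun e => h2 (hinj e)
  have hpD : p ∈ D := hmem _
  have hqD : q ∈ D := hmem _
  have hDU : D ⊆ U := fun z hz => hclU (subset_closure hz)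
  have hfp : h p = p := hfix _
  have hfq : h q = q := hfix _
  have hmapsD : Set.MapsTo h D D := fun z hz => hmapsU z (hDU hz)
  have hiterD : ∀ n : ℕ, Set.MapsTo (h^[n]) D D := fun n => hmapsD.iterate n
  have hiter_diff : ∀ n : ℕ, DifferentiableOn ℂ (h^[n]) D := by
    intro n
    induction n with
    | zero => simpa using differentiableOn_id
    | succ n ih =>
      rw [Function.iterate_succ']
      exact hdiff.comp ih fun z hz => hDU (hiterD n hz)
  -- a big ball containing D
  obtain ⟨R₀, hR₀⟩ := hbd.subset_closedBall p
  set R₂ : ℝ := max R₀ 0 + 1 with hR₂def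
  have hR₂pos : 0 < R₂ := by positivity
  have hDball : D ⊆ ball p R₂ := by
    intro z hz
    have h1 := hR₀ hz
    rw [mem_closedBall] at h1
    rw [mem_ball]
    calc dist z p ≤ R₀ := h1
      _ ≤ max R₀ 0 := le_max_left _ _
      _ < R₂ := by rw [hR₂def]; linarith
  -- a small ball around p inside D
  obtain ⟨r, hrpos, hrD⟩ := Metric.isOpen_iff.mp hDo p hpD
  -- the image of the closure of D is a compact set strictly inside D
  have hKc : IsCompact (h '' closure D) :=
    (hbd.isCompact_closure).image_of_continuousOn (hdiff.continuousOn.mono hclU)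
  have hKD : h '' closure D ⊆ D := by
    rintro _ ⟨z, hz, rfl⟩; exact hmapsU z (hclU hz)
  obtain ⟨ε, hεpos, hεsub⟩ := hKc.exists_thickening_subset_open hDo hKD
  -- the dilated map H
  set c : ℝ := 1 + ε / (2 * R₂) with hcdef
  have hcpos : 0 < ε / (2 * R₂) := div_pos hεpos (by positivity)
  have hc1 : 1 < c := by rw [hcdef]; linarith
  set H : (Fin N → ℂ) → Fin N → ℂ := fun z => ((c : ℂ)) • (h z - p) + p with hHdef
  have hHp : H p = p := by simp [hHdef, hfp]
  have hHmaps : Set.MapsTo H D D := by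
    intro z hz
    have hhzD : h z ∈ D := hmapsD hz
    have hball : ball (h z) ε ⊆ D :=
      (Metric.ball_subset_thickening (Set.mem_image_of_mem h (subset_closure hz)) ε).trans hεsub
    apply hball
    rw [mem_ball, dist_eq_norm]
    have heq : H z - h z = (((c : ℂ)) - 1) • (h z - p) := by
      simp only [hHdef]; module
    have hnc : ‖((c : ℂ)) - 1‖ = ε / (2 * R₂) := by
      have : ((c : ℂ)) - 1 = ((c - 1 : ℝ) : ℂ) := by push_cast; ring
      rw [this]
      simp only [Complex.norm_real, Real.norm_eq_abs]
      rw [abs_of_pos (by rw [hcdef]; linarith)]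
      rw [hcdef]; ring
    have hzb : ‖h z - p‖ < R₂ := by
      have := hDball hhzD; rwa [mem_ball, dist_eq_norm] at this
    calc ‖H z - h z‖ = (ε / (2 * R₂)) * ‖h z - p‖ := by rw [heq, norm_smul, hnc]
      _ < (ε / (2 * R₂)) * R₂ := mul_lt_mul_of_pos_left hzb hcpos
      _ = ε / 2 := by field_simp
      _ < ε := by linarith
  have hHdiff : DifferentiableOn ℂ H U :=
    ((hdiff.sub_const p).const_smul ((c : ℂ))).add_const p
  have hHiterD : ∀ n : ℕ, Set.MapsTo (H^[n]) D D := fun n => hHmaps.iterate n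
  have hHiter_diff : ∀ n : ℕ, DifferentiableOn ℂ (H^[n]) D := by
    intro n
    induction n with
    | zero => simpa using differentiableOn_id
    | succ n ih =>
      rw [Function.iterate_succ']
      exact hHdiff.comp ih fun z hz => hDU (hHiterD n hz)
  -- derivatives at the fixed point p
  have hA : HasFDerivAt h (fderiv ℂ h p) p :=
    (hdiff.differentiableAt (hUo.mem_nhds (hDU hpD))).hasFDerivAt
  set A := fderiv ℂ h p with hAdef
  have hHA : HasFDerivAt H (((c : ℂ)) • A) p := by
    have := ((hA.sub_const p).const_smul ((c : ℂ))).add_const p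
    simpa [hHdef] using this
  have hAn : ∀ n : ℕ, ‖A ^ n‖ ≤ (R₂ / r) / c ^ n := by
    intro n
    have hHnp : H^[n] p = p := Function.iterate_fixed hHp n
    have hmapsn : Set.MapsTo (H^[n]) (ball p r) (ball ((H^[n]) p) R₂) := by
      intro x hx
      rw [hHnp]
      exact hDball (hHiterD n (hrD hx))
    have hb := aux_fderiv_bound hrpos ((hHiter_diff n).mono hrD) hmapsn (hHA.iterate hHp n)
    rw [smul_pow] at hb
    have hns : ‖((c : ℂ)) ^ n • A ^ n‖ = ‖((c : ℂ)) ^ n‖ * ‖A ^ n‖ := norm_smul _ _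
    rw [hns] at hb
    have hcn : ‖((c : ℂ)) ^ n‖ = c ^ n := by
      rw [norm_pow, Complex.norm_real, Real.norm_eq_abs, abs_of_pos (by linarith)]
    rw [hcn] at hb
    have hcnpos : (0 : ℝ) < c ^ n := pow_pos (by linarith) n
    rw [div_div]
    rw [le_div_iff₀ (by positivity)]
    calc ‖A ^ n‖ * (r * c ^ n) = (c ^ n * ‖A ^ n‖) * r := by ring
      _ ≤ (R₂ / r) * r := by
          apply mul_le_mul_of_nonneg_right hb hrpos.le
      _ = R₂ := by field_simp
  -- choose n₀ with small derivative norm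
  obtain ⟨n₀, hn₀⟩ := pow_unbounded_of_one_lt (4 * (R₂ / r)) hc1
  have hRr : 0 < R₂ / r := div_pos hR₂pos hrpos
  have hAn₀ : ‖A ^ n₀‖ < 1 / 4 := by
    have h1 : (R₂ / r) / c ^ n₀ < (R₂ / r) / (4 * (R₂ / r)) :=
      div_lt_div_of_pos_left hRr (by linarith) hn₀
    have h2 : (R₂ / r) / (4 * (R₂ / r)) = 1 / 4 := by field_simp
    calc ‖A ^ n₀‖ ≤ (R₂ / r) / c ^ n₀ := hAn n₀
      _ < 1 / 4 := by rw [← h2]; exact h1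
  -- the contracting iterate φ = h^[n₀]
  have hφder : HasFDerivAt (h^[n₀]) (A ^ n₀) p := hA.iterate hfp n₀
  have hφp : h^[n₀] p = p := Function.iterate_fixed hfp n₀
  have hlo := (Asymptotics.isLittleO_iff.mp hφder.isLittleO) (by norm_num : (0:ℝ) < 1/4)
  have hev := hlo.and (hDo.eventually_mem hpD)
  rw [Metric.eventually_nhds_iff] at hev
  obtain ⟨δ₀, hδ₀pos, hδ₀⟩ := hev
  have hcontr : ∀ z, dist z p < δ₀ → z ∈ D ∧ ‖h^[n₀] z - p‖ ≤ 1 / 2 * ‖z - p‖ := by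
    intro z hz
    obtain ⟨hb, hzD⟩ := hδ₀ hz
    rw [hφp] at hb
    refine ⟨hzD, ?_⟩
    have hdecomp : h^[n₀] z - p = (h^[n₀] z - p - (A ^ n₀) (z - p)) + (A ^ n₀) (z - p) := by
      abel
    have htri : ‖h^[n₀] z - p‖ ≤ ‖h^[n₀] z - p - (A ^ n₀) (z - p)‖ + ‖(A ^ n₀) (z - p)‖ := by
      have h3 := norm_add_le (h^[n₀] z - p - (A ^ n₀) (z - p)) ((A ^ n₀) (z - p))
      rw [← hdecomp] at h3
      exact h3
    calc ‖h^[n₀] z - p‖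
        ≤ ‖h^[n₀] z - p - (A ^ n₀) (z - p)‖ + ‖(A ^ n₀) (z - p)‖ := htri
      _ ≤ 1 / 4 * ‖z - p‖ + ‖A ^ n₀‖ * ‖z - p‖ :=
          add_le_add hb ((A ^ n₀).le_opNorm _)
      _ ≤ 1 / 4 * ‖z - p‖ + 1 / 4 * ‖z - p‖ := by
          have := norm_nonneg (z - p)
          nlinarith [hAn₀.le]
      _ = 1 / 2 * ‖z - p‖ := by ring
  -- the basin of attraction
  set S : Set (Fin N → ℂ) := ⋃ n : ℕ, (D ∩ (h^[n]) ⁻¹' ball p δ₀) with hSdef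
  have hSopen : IsOpen S :=
    isOpen_iUnion fun n => (hiter_diff n).continuousOn.isOpen_inter_preimage hDo isOpen_ball
  have hmemS : ∀ z, z ∈ S ↔ z ∈ D ∧ ∃ n, h^[n] z ∈ ball p δ₀ := by
    intro z
    simp only [hSdef, mem_iUnion, mem_inter_iff, mem_preimage]
    tauto
  have hpS : p ∈ S := (hmemS p).2 ⟨hpD, 0, by simp only [Function.iterate_zero, id_eq]; exact mem_ball_self hδ₀pos⟩
  -- relative closedness of S in D
  have key : ∀ z ∈ D, z ∈ closure S → z ∈ S := by
    intro z hzD hzcl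
    obtain ⟨r', hr'pos, hr'D⟩ := Metric.isOpen_iff.mp hDo z hzD
    have hLpos : 0 < 2 * R₂ / r' := by positivity
    set ε₀ := min r' (δ₀ * r' / (8 * R₂)) with hε₀def
    have hε₀pos : 0 < ε₀ := lt_min hr'pos (by positivity)
    obtain ⟨w, hwS, hwdist⟩ := Metric.mem_closure_iff.mp hzcl ε₀ hε₀pos
    obtain ⟨hwD, n₁, hn₁⟩ := (hmemS w).1 hwS
    have hwz : w ∈ ball z r' := by
      rw [mem_ball, dist_comm]
      exact hwdist.trans_le (min_le_left _ _)
    have hwznorm : ‖w - z‖ < ε₀ := by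
      rw [← dist_eq_norm, dist_comm]; exact hwdist
    -- Lipschitz estimate for h^[n₀ + n₁] on ball z r'
    have hmaps' : Set.MapsTo (h^[n₀+n₁]) (ball z r') (ball ((h^[n₀+n₁]) z) (2 * R₂)) := by
      intro x hx
      have hx1 : h^[n₀+n₁] x ∈ ball p R₂ := hDball (hiterD _ (hr'D hx))
      have hz1 : h^[n₀+n₁] z ∈ ball p R₂ := hDball (hiterD _ hzD)
      rw [mem_ball] at hx1 hz1 ⊢
      calc dist (h^[n₀+n₁] x) (h^[n₀+n₁] z)
          ≤ dist (h^[n₀+n₁] x) p + dist p (h^[n₀+n₁] z) := dist_triangle _ _ _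
        _ < R₂ + R₂ := by rw [dist_comm p]; exact add_lt_add hx1 hz1
        _ = 2 * R₂ := by ring
    have hlip := aux_line_lip ((hiter_diff (n₀+n₁)).mono hr'D) hmaps' hwz
    -- contraction at h^[n₁] w
    have hδn₁ : dist (h^[n₁] w) p < δ₀ := by rwa [mem_ball] at hn₁
    have hφw := (hcontr (h^[n₁] w) hδn₁).2
    rw [← Function.iterate_add_apply] at hφw
    have hfirst : ‖h^[n₀+n₁] w - h^[n₀+n₁] z‖ < δ₀ / 4 := by
      have h1 : 2 * R₂ / r' * ‖w - z‖ < 2 * R₂ / r' * ε₀ :=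
        mul_lt_mul_of_pos_left hwznorm hLpos
      have h2 : 2 * R₂ / r' * ε₀ ≤ δ₀ / 4 := by
        have : ε₀ ≤ δ₀ * r' / (8 * R₂) := min_le_right _ _
        calc 2 * R₂ / r' * ε₀ ≤ 2 * R₂ / r' * (δ₀ * r' / (8 * R₂)) :=
              mul_le_mul_of_nonneg_left this hLpos.le
          _ = δ₀ / 4 := by field_simp; ring
      linarith [hlip]
    have hsecond : ‖h^[n₀+n₁] w - p‖ < δ₀ / 2 := by
      rw [dist_eq_norm] at hδn₁
      calc ‖h^[n₀+n₁] w - p‖ ≤ 1 / 2 * ‖h^[n₁] w - p‖ := hφw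
        _ < 1 / 2 * δ₀ := by linarith
        _ = δ₀ / 2 := by ring
    refine (hmemS z).2 ⟨hzD, n₀ + n₁, ?_⟩
    rw [mem_ball, dist_eq_norm]
    calc ‖h^[n₀+n₁] z - p‖
        ≤ ‖h^[n₀+n₁] z - h^[n₀+n₁] w‖ + ‖h^[n₀+n₁] w - p‖ := by
          have heq2 : h^[n₀+n₁] z - p = (h^[n₀+n₁] z - h^[n₀+n₁] w) + (h^[n₀+n₁] w - p) := by
            abel
          have h3 := norm_add_le (h^[n₀+n₁] z - h^[n₀+n₁] w) (h^[n₀+n₁] w - p)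
          rw [← heq2] at h3
          exact h3
      _ < δ₀ / 4 + δ₀ / 2 := by
          rw [norm_sub_rev]
          exact add_lt_add hfirst hsecond
      _ < δ₀ := by linarith
  -- connectedness: q ∈ S
  have hqS : q ∈ S := by
    by_contra hqS
    have hqcl : q ∉ closure S := fun hc => hqS (key q hqD hc)
    obtain ⟨x, hxD, hxS, hxcl⟩ :=
      hDc.isPreconnected S (closure S)ᶜ hSopen isClosed_closure.isOpen_compl
        (fun z hz => by
          by_cases hc : z ∈ closure S
          · exact Or.inl (key z hz hc)
          · exact Or.inr hc)
        ⟨p, hpD, hpS⟩ ⟨q, hqD, hqcl⟩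
    exact hxcl (subset_closure hxS)
  -- conclusion
  obtain ⟨-, n, hn⟩ := (hmemS q).1 hqS
  rw [Function.iterate_fixed hfq n] at hn
  rw [mem_ball] at hn
  have hc2 := (hcontr q hn).2
  rw [Function.iterate_fixed hfq n₀] at hc2
  have hq0 : ‖q - p‖ = 0 := le_antisymm (by linarith) (norm_nonneg _)
  exact hpq ((sub_eq_zero.mp (norm_eq_zero.mp hq0)).symm)

end
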